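/- Let 1 < p, q < ∞ and let u, v be weights with (u,v) ∈ Fourier(p,q). Then there is a constant C such that for every bounded measurable set E ⊆ ℝⁿ, every μ ∈ ℝⁿ with −μ ∈ E, every τ ∈ ℝⁿ, and every nonnegative f ∈ L¹(ℝⁿ) vanishing almost everywhere outside E: (∫_E f(x) dx) · u((E+μ)° + τ)^{1/q} ≤ C (∫_E f(x)^p v(x) dx)^{1/p}; moreover, for every nonnegative g ∈ L¹(ℝⁿ) vanishing almost everywhere outside (E+μ)° + τ: (∫ g(x) dx) · u(E)^{1/q} ≤ C (∫ g(x)^p v(x) dx)^{1/p}. -/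

import Mathlib

open MeasureTheory ENNReal Set Bornology Pointwise

noncomputable section

abbrev Euc (n : ℕ) := EuclideanSpace ℝ (Fin n)

/-- The Fourier transform `f̂(z) = ∫ f(x) e^{-i x·z} dx`. -/
def ftrans {n : ℕ} (f : Euc n → ℂ) (z : Euc n) : ℂ :=
  ∫ x : Euc n, f x * Complex.exp (-(Complex.I * ((inner ℝ x z : ℝ) : ℂ)))

/-- A weight: nonnegative, measurable, locally integrable. -/
def IsWeight {n : ℕ} (u : Euc n → ℝ) : Prop :=
  Measurable u ∧ (∀ x, 0 ≤ u x) ∧ LocallyIntegrable u volume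

/-- `u(A) = ∫_A u`, as a value in `ℝ≥0∞`. -/
def wMeas {n : ℕ} (u : Euc n → ℝ) (A : Set (Euc n)) : ℝ≥0∞ :=
  ∫⁻ x in A, ENNReal.ofReal (u x)

/-- The polarSet of a set: `E° = {z : |x·z| ≤ 1 for all x ∈ E}`. -/
def polarSet {n : ℕ} (E : Set (Euc n)) : Set (Euc n) :=
  {z | ∀ x ∈ E, |(inner ℝ x z : ℝ)| ≤ 1}

/-- The setTranslate `E + τ` of a set. -/
def setTranslate {n : ℕ} (τ : Euc n) (E : Set (Euc n)) : Set (Euc n) :=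
  (fun x => x + τ) '' E

/-- Conjugate exponent `p' = p/(p-1)`. -/
def rconj (p : ℝ) : ℝ := p / (p - 1)

/-- The weight `w = v^{-p'/p}`. -/
def wFun {n : ℕ} (p : ℝ) (v : Euc n → ℝ) : Euc n → ℝ :=
  fun x => v x ^ (-(rconj p) / p)

/-- The weighted Fourier inequality class `Fourier(p,q)`. -/
def FourierPQ {n : ℕ} (p q : ℝ) (u v : Euc n → ℝ) : Prop :=
  ∃ C : ℝ, 0 < C ∧ ∀ f : Euc n → ℂ, Integrable f →
    (∫⁻ z, (‖ftrans f z‖₊ : ℝ≥0∞) ^ q * ENNReal.ofReal (u z)) ^ (1/q) ≤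
      ENNReal.ofReal C * (∫⁻ x, (‖f x‖₊ : ℝ≥0∞) ^ p * ENNReal.ofReal (v x)) ^ (1/p)

/-- Axis-parallel cube with center `c` and half-side `r`. -/
def axisCube {n : ℕ} (c : Euc n) (r : ℝ) : Set (Euc n) :=
  {x | ∀ i, |x i - c i| ≤ r}

/-- An axis-parallel cube. -/
def IsCube {n : ℕ} (Q : Set (Euc n)) : Prop :=
  ∃ (c : Euc n) (r : ℝ), 0 < r ∧ Q = axisCube c r

/-- Comparability of measures: `(μ₁,μ₂) ∈ C(δ)`. -/
def Compar {n : ℕ} (μ₁ μ₂ : Measure (Euc n)) (δ : ℝ) : Prop :=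
  ∃ C : ℝ, 0 < C ∧ ∀ Q : Set (Euc n), IsCube Q → ∀ E ⊆ Q, MeasurableSet E →
    μ₁ E * μ₂ Q ^ δ ≤ ENNReal.ofReal C * (μ₁ Q * μ₂ E ^ δ)

/-- A doubling measure. -/
def Doubling {n : ℕ} (μ : Measure (Euc n)) : Prop :=
  ∃ C : ℝ, 0 < C ∧ ∀ (c : Euc n) (r : ℝ), 0 < r →
    μ (axisCube c (2 * r)) ≤ ENNReal.ofReal C * μ (axisCube c r)

/-- `(u, |·|) ∈ C(δ)`. -/
def ComparWL {n : ℕ} (u : Euc n → ℝ) (δ : ℝ) : Prop :=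
  ∃ C : ℝ, 0 < C ∧ ∀ Q : Set (Euc n), IsCube Q → ∀ E ⊆ Q, MeasurableSet E →
    wMeas u E * volume Q ^ δ ≤ ENNReal.ofReal C * (wMeas u Q * volume E ^ δ)

/-- `(|·|, v) ∈ C(δ)`. -/
def ComparLW {n : ℕ} (v : Euc n → ℝ) (δ : ℝ) : Prop :=
  ∃ C : ℝ, 0 < C ∧ ∀ Q : Set (Euc n), IsCube Q → ∀ E ⊆ Q, MeasurableSet E →
    volume E * wMeas v Q ^ δ ≤ ENNReal.ofReal C * (volume Q * wMeas v E ^ δ)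

/-- The class `N_Q(p,q)`. -/
def NQ {n : ℕ} (p q : ℝ) (u v : Euc n → ℝ) : Prop :=
  ∃ C : ℝ, 0 < C ∧ ∀ Q : Set (Euc n), IsCube Q → ∀ μ : Euc n, -μ ∈ Q → ∀ τ : Euc n,
    wMeas u Q ^ (1/q) * wMeas (wFun p v) (setTranslate τ (polarSet (setTranslate μ Q))) ^ (1 / rconj p)
        ≤ ENNReal.ofReal C ∧
    wMeas u (setTranslate τ (polarSet (setTranslate μ Q))) ^ (1/q) * wMeas (wFun p v) Q ^ (1 / rconj p)
        ≤ ENNReal.ofReal C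

/-- The class `N_{Q'}(p,q)`. -/
def NQ' {n : ℕ} (p q : ℝ) (u v : Euc n → ℝ) : Prop :=
  ∃ C : ℝ, 0 < C ∧ ∀ Q : Set (Euc n), IsCube Q → ∀ μ : Euc n, -μ ∈ Q → ∀ τ : Euc n,
    wMeas u Q ^ (1/q) * volume (polarSet Q)
        ≤ ENNReal.ofReal C * wMeas v (setTranslate τ (polarSet (setTranslate μ Q))) ^ (1/p) ∧
    wMeas u (setTranslate τ (polarSet (setTranslate μ Q))) ^ (1/q) * volume Q
        ≤ ENNReal.ofReal C * wMeas v Q ^ (1/p)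

/-- A rectanguloid centered at the origin. -/
def IsRectanguloid0 {n : ℕ} (R : Set (Euc n)) : Prop :=
  ∃ (b : OrthonormalBasis (Fin n) ℝ (Euc n)) (a : Fin n → ℝ),
    (∀ i, 0 < a i) ∧ R = {x | ∀ i, |(inner ℝ x (b i) : ℝ)| ≤ a i}

/-- An ellipsoid centered at the origin. -/
def IsEllipsoid0 {n : ℕ} (S : Set (Euc n)) : Prop :=
  ∃ T : Euc n ≃ₗ[ℝ] Euc n, S = ⇑T '' Metric.closedBall 0 1



/-! ### Auxiliary lemmas -/

lemma re_mul_exp' (r s : ℝ) :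
    (((r:ℂ)) * Complex.exp (-(Complex.I * (s:ℂ)))).re = r * Real.cos s := by
  have h : (-(Complex.I * (s:ℂ))) = ((-s : ℝ):ℂ) * Complex.I := by push_cast; ring
  rw [h, Complex.mul_re, Complex.exp_ofReal_mul_I_re, Complex.exp_ofReal_mul_I_im]
  simp

lemma norm_expI' (s : ℝ) : ‖Complex.exp (-(Complex.I * (s:ℂ)))‖ = 1 := by
  rw [Complex.norm_exp]; simp

lemma integrable_mul_exp' {n : ℕ} (f : Euc n → ℝ) (hf : Integrable f) (θ : Euc n → ℝ)
    (hθ : Continuous θ) :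
    Integrable (fun x => (f x : ℂ) * Complex.exp (-(Complex.I * (θ x : ℂ)))) := by
  have h1 : Integrable (fun x => Complex.exp (-(Complex.I * (θ x : ℂ))) * (f x : ℂ)) :=
    hf.ofReal.bdd_mul
      (Continuous.aestronglyMeasurable (by continuity))
      (c := 1) (Filter.Eventually.of_forall fun x => le_of_eq (norm_expI' _))
  exact h1.congr (Filter.Eventually.of_forall fun x => mul_comm _ _)

lemma lb' {n : ℕ} (f : Euc n → ℝ) (hf : Integrable f) (hf0 : ∀ x, 0 ≤ f x)
    (w : Euc n) (c : ℝ)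
    (hbd : ∀ᵐ x ∂(volume : Measure (Euc n)), f x ≠ 0 → |(inner ℝ x w : ℝ) + c| ≤ 1) :
    Real.cos 1 * (∫ x, f x) ≤
      ‖∫ x, (f x : ℂ) * Complex.exp (-(Complex.I * ((inner ℝ x w : ℝ) : ℂ)))‖ := by
  have hθc : Continuous fun x : Euc n => (inner ℝ x w : ℝ) :=
    continuous_id.inner continuous_const
  have hθc' : Continuous fun x : Euc n => (inner ℝ x w : ℝ) + c := by continuity
  set g : Euc n → ℂ :=
    fun x => (f x : ℂ) * Complex.exp (-(Complex.I * (((inner ℝ x w : ℝ) + c : ℝ) : ℂ)))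
  have hgint : Integrable g := integrable_mul_exp' f hf _ hθc'
  have hnorm : ‖∫ x, g x‖ =
      ‖∫ x, (f x : ℂ) * Complex.exp (-(Complex.I * ((inner ℝ x w : ℝ) : ℂ)))‖ := by
    have : ∀ x, g x = Complex.exp (-(Complex.I * (c:ℂ))) *
        ((f x : ℂ) * Complex.exp (-(Complex.I * ((inner ℝ x w : ℝ) : ℂ)))) := by
      intro x
      have he : Complex.exp (-(Complex.I * (((inner ℝ x w : ℝ) + c : ℝ) : ℂ))) =
          Complex.exp (-(Complex.I * (c:ℂ))) *
            Complex.exp (-(Complex.I * ((inner ℝ x w : ℝ) : ℂ))) := by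
        rw [← Complex.exp_add]; congr 1; push_cast; ring
      simp only [g, he]; ring
    rw [integral_congr_ae (Filter.Eventually.of_forall this), integral_const_mul, norm_mul,
      norm_expI', one_mul]
  rw [← hnorm]
  have hre : (∫ x, g x).re = ∫ x, f x * Real.cos ((inner ℝ x w : ℝ) + c) := by
    have h2 := integral_re (𝕜 := ℂ) hgint
    simp only [RCLike.re_to_complex] at h2
    rw [← h2]
    exact integral_congr_ae (Filter.Eventually.of_forall fun x => (re_mul_exp' _ _))
  have hint2 : Integrable (fun x => f x * Real.cos ((inner ℝ x w : ℝ) + c)) := by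
    refine hf.mono (hf.1.mul ((Real.continuous_cos.comp hθc').aestronglyMeasurable)) ?_
    refine Filter.Eventually.of_forall fun x => ?_
    rw [norm_mul]
    calc ‖f x‖ * ‖Real.cos _‖ ≤ ‖f x‖ * 1 := by
          gcongr; exact Real.abs_cos_le_one _
      _ = ‖f x‖ := mul_one _
  have hmono : Real.cos 1 * ∫ x, f x ≤ ∫ x, f x * Real.cos ((inner ℝ x w : ℝ) + c) := by
    rw [← integral_const_mul]
    refine integral_mono_ae (hf.const_mul _) hint2 ?_
    filter_upwards [hbd] with x hx
    rcases eq_or_ne (f x) 0 with h | h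
    · simp [h]
    · rw [mul_comm (Real.cos 1)]
      refine mul_le_mul_of_nonneg_left ?_ (hf0 x)
      calc Real.cos 1 ≤ Real.cos |(inner ℝ x w : ℝ) + c| :=
            Real.cos_le_cos_of_nonneg_of_le_pi (abs_nonneg _)
              (by linarith [Real.pi_gt_three]) (hx h)
        _ = Real.cos ((inner ℝ x w : ℝ) + c) := Real.cos_abs _
  calc Real.cos 1 * ∫ x, f x ≤ (∫ x, g x).re := by rw [hre]; exact hmono
    _ ≤ ‖∫ x, g x‖ := Complex.re_le_norm _

lemma helper' {n : ℕ} (p q C : ℝ) (hq : 1 < q) (hC : 0 < C)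
    (u v : Euc n → ℝ)
    (hineq : ∀ f : Euc n → ℂ, Integrable f →
      (∫⁻ z, (‖ftrans f z‖₊ : ℝ≥0∞) ^ q * ENNReal.ofReal (u z)) ^ (1/q) ≤
        ENNReal.ofReal C * (∫⁻ x, (‖f x‖₊ : ℝ≥0∞) ^ p * ENNReal.ofReal (v x)) ^ (1/p))
    (S : Set (Euc n)) (hS : MeasurableSet S)
    (f : Euc n → ℝ) (hf : Integrable f) (hf0 : ∀ x, 0 ≤ f x)
    (a : Euc n) (cf : Euc n → ℝ)
    (hbd : ∀ z ∈ S, ∀ᵐ x ∂(volume : Measure (Euc n)), f x ≠ 0 →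
      |(inner ℝ x (z + a) : ℝ) + cf z| ≤ 1) :
    ENNReal.ofReal (∫ x, f x) * (wMeas u S) ^ (1/q) ≤
      ENNReal.ofReal (C / Real.cos 1) *
        (∫⁻ x, ENNReal.ofReal (f x) ^ p * ENNReal.ofReal (v x)) ^ (1/p) := by
  have hc1 : 0 < Real.cos 1 := Real.cos_pos_of_mem_Ioo
    ⟨by linarith [Real.pi_gt_three], by linarith [Real.pi_gt_three]⟩
  set A := ∫ x, f x with hA
  have hA0 : 0 ≤ A := integral_nonneg hf0
  set h : Euc n → ℂ := fun x => (f x : ℂ) * Complex.exp (-(Complex.I * ((inner ℝ x a : ℝ) : ℂ)))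
    with hh
  have hhint : Integrable h :=
    integrable_mul_exp' f hf _ (continuous_id.inner continuous_const)
  have hnormh : ∀ x, (‖h x‖₊ : ℝ≥0∞) = ENNReal.ofReal (f x) := by
    intro x
    rw [← enorm_eq_nnnorm, ← ofReal_norm, hh]
    simp only [norm_mul, norm_expI', Complex.norm_real, mul_one, Real.norm_eq_abs,
      abs_of_nonneg (hf0 x)]
  have hft : ∀ z, ftrans h z =
      ∫ x, (f x : ℂ) * Complex.exp (-(Complex.I * ((inner ℝ x (z + a) : ℝ) : ℂ))) := by
    intro z
    unfold ftrans
    refine integral_congr_ae (Filter.Eventually.of_forall fun x => ?_)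
    simp only [hh]
    rw [mul_assoc, ← Complex.exp_add]
    congr 2
    have : (inner ℝ x (z + a) : ℝ) = (inner ℝ x z : ℝ) + (inner ℝ x a : ℝ) := inner_add_right x z a
    rw [this]; push_cast; ring
  have hlow : ∀ z ∈ S, ENNReal.ofReal (Real.cos 1 * A) ≤ (‖ftrans h z‖₊ : ℝ≥0∞) := by
    intro z hz
    rw [← enorm_eq_nnnorm, ← ofReal_norm]
    refine ENNReal.ofReal_le_ofReal ?_
    rw [hft z]
    exact lb' f hf hf0 (z + a) (cf z) (hbd z hz)
  have key := hineq h hhint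
  have hR : (∫⁻ x, (‖h x‖₊ : ℝ≥0∞) ^ p * ENNReal.ofReal (v x)) =
      ∫⁻ x, ENNReal.ofReal (f x) ^ p * ENNReal.ofReal (v x) :=
    lintegral_congr fun x => by rw [hnormh x]
  rw [hR] at key
  set R := (∫⁻ x, ENNReal.ofReal (f x) ^ p * ENNReal.ofReal (v x)) ^ (1/p)
  have step1 : (ENNReal.ofReal (Real.cos 1 * A)) ^ q * wMeas u S ≤
      ∫⁻ z, (‖ftrans h z‖₊ : ℝ≥0∞) ^ q * ENNReal.ofReal (u z) := by
    calc (ENNReal.ofReal (Real.cos 1 * A)) ^ q * wMeas u S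
        = ∫⁻ z in S, (ENNReal.ofReal (Real.cos 1 * A)) ^ q * ENNReal.ofReal (u z) := by
          rw [wMeas, lintegral_const_mul']
          exact ENNReal.rpow_ne_top_of_nonneg (by positivity) ofReal_ne_top
      _ ≤ ∫⁻ z in S, (‖ftrans h z‖₊ : ℝ≥0∞) ^ q * ENNReal.ofReal (u z) := by
          refine setLIntegral_mono' hS fun z hz => ?_
          gcongr
          exact hlow z hz
      _ ≤ ∫⁻ z, (‖ftrans h z‖₊ : ℝ≥0∞) ^ q * ENNReal.ofReal (u z) :=
          setLIntegral_le_lintegral _ _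
  have step2 : ENNReal.ofReal (Real.cos 1 * A) * (wMeas u S) ^ (1/q) ≤
      ENNReal.ofReal C * R := by
    have h2 := ENNReal.rpow_le_rpow step1 (by positivity : (0:ℝ) ≤ 1/q)
    rw [ENNReal.mul_rpow_of_nonneg _ _ (by positivity), ← ENNReal.rpow_mul, mul_one_div,
      div_self (by positivity : q ≠ 0), ENNReal.rpow_one] at h2
    exact h2.trans key
  have h3 : ENNReal.ofReal (Real.cos 1) * (ENNReal.ofReal A * (wMeas u S) ^ (1/q)) ≤
      ENNReal.ofReal C * R := by
    rw [← mul_assoc, ← ENNReal.ofReal_mul hc1.le]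
    exact step2
  have hne : ENNReal.ofReal (Real.cos 1) ≠ 0 := by
    simp [ENNReal.ofReal_eq_zero, not_le, hc1]
  calc ENNReal.ofReal A * (wMeas u S) ^ (1/q)
      = (ENNReal.ofReal (Real.cos 1))⁻¹ *
          (ENNReal.ofReal (Real.cos 1) * (ENNReal.ofReal A * (wMeas u S) ^ (1/q))) := by
        rw [← mul_assoc, ENNReal.inv_mul_cancel hne ofReal_ne_top, one_mul]
    _ ≤ (ENNReal.ofReal (Real.cos 1))⁻¹ * (ENNReal.ofReal C * R) := mul_le_mul_right h3 _
    _ = ENNReal.ofReal (C / Real.cos 1) * R := by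
        rw [ENNReal.ofReal_div_of_pos hc1, ENNReal.div_eq_inv_mul, mul_assoc]

lemma setTranslate_eq_preimage' {n : ℕ} (τ : Euc n) (E : Set (Euc n)) :
    setTranslate τ E = (fun x => x - τ) ⁻¹' E := by
  ext z
  constructor
  · rintro ⟨y, hy, rfl⟩; simpa using hy
  · intro hz; exact ⟨z - τ, hz, by simp⟩

lemma isClosed_polarSet' {n : ℕ} (E : Set (Euc n)) : IsClosed (polarSet E) := by
  have : polarSet E = ⋂ x ∈ E, {z : Euc n | |(inner ℝ x z : ℝ)| ≤ 1} := by
    ext z; simp [polarSet]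
  rw [this]
  refine isClosed_biInter fun x _ => ?_
  exact isClosed_le (continuous_const.inner continuous_id).abs continuous_const

lemma measurableSet_T' {n : ℕ} (τ μ : Euc n) (E : Set (Euc n)) :
    MeasurableSet (setTranslate τ (polarSet (setTranslate μ E))) := by
  rw [setTranslate_eq_preimage']
  exact ((isClosed_polarSet' _).preimage (continuous_id.sub continuous_const)).measurableSet

lemma mem_translate_add' {n : ℕ} (μ : Euc n) (E : Set (Euc n)) (x : Euc n) (hx : x ∈ E) :
    x + μ ∈ setTranslate μ E := ⟨x, hx, rfl⟩


theorem stmt2 (n : ℕ) (hn : 1 ≤ n) (p q : ℝ) (hp : 1 < p) (hq : 1 < q)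
    (u v : Euc n → ℝ) (hu : IsWeight u) (hv : IsWeight v)
    (hF : FourierPQ p q u v) :
    ∃ C : ℝ, 0 < C ∧ ∀ E : Set (Euc n), IsBounded E → MeasurableSet E →
      ∀ μ : Euc n, -μ ∈ E → ∀ τ : Euc n,
      (∀ f : Euc n → ℝ, Integrable f → (∀ x, 0 ≤ f x) →
        (∀ᵐ x ∂(volume : Measure (Euc n)), x ∉ E → f x = 0) →
        ENNReal.ofReal (∫ x, f x) * wMeas u (setTranslate τ (polarSet (setTranslate μ E))) ^ (1/q) ≤
          ENNReal.ofReal C *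
            (∫⁻ x, ENNReal.ofReal (f x) ^ p * ENNReal.ofReal (v x)) ^ (1/p)) ∧
      (∀ g : Euc n → ℝ, Integrable g → (∀ x, 0 ≤ g x) →
        (∀ᵐ x ∂(volume : Measure (Euc n)), x ∉ setTranslate τ (polarSet (setTranslate μ E)) → g x = 0) →
        ENNReal.ofReal (∫ x, g x) * wMeas u E ^ (1/q) ≤
          ENNReal.ofReal C *
            (∫⁻ x, ENNReal.ofReal (g x) ^ p * ENNReal.ofReal (v x)) ^ (1/p)) := by
  obtain ⟨C, hC, hineq⟩ := hF
  have hc1 : 0 < Real.cos 1 := Real.cos_pos_of_mem_Ioo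
    ⟨by linarith [Real.pi_gt_three], by linarith [Real.pi_gt_three]⟩
  refine ⟨C / Real.cos 1, div_pos hC hc1, ?_⟩
  intro E hEb hEm μ hμ τ
  constructor
  · intro f hf hf0 hvan
    refine helper' p q C hq hC u v hineq _ (measurableSet_T' τ μ E) f hf hf0 (-τ)
      (fun z => (inner ℝ μ (z + -τ) : ℝ)) ?_
    intro z hz
    filter_upwards [hvan] with x hx hfx
    have hxE : x ∈ E := not_not.1 fun h => hfx (hx h)
    obtain ⟨y, hy, rfl⟩ := hz
    have hyy : y + τ + -τ = y := by abel
    rw [hyy]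
    have hsum : (inner ℝ x y : ℝ) + (inner ℝ μ y : ℝ) = (inner ℝ (x + μ) y : ℝ) :=
      (inner_add_left x μ y).symm
    rw [hsum]
    exact hy (x + μ) (mem_translate_add' μ E x hxE)
  · intro g hg hg0 hvan
    refine helper' p q C hq hC u v hineq E hEm g hg hg0 μ
      (fun z => -(inner ℝ τ (z + μ) : ℝ)) ?_
    intro z hz
    filter_upwards [hvan] with x hx hgx
    have hxT : x ∈ setTranslate τ (polarSet (setTranslate μ E)) :=
      not_not.1 fun h => hgx (hx h)
    obtain ⟨y, hy, rfl⟩ := hxT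
    have hsum : (inner ℝ (y + τ) (z + μ) : ℝ) + -(inner ℝ τ (z + μ) : ℝ) = (inner ℝ y (z + μ) : ℝ) := by
      rw [inner_add_left]; ring
    rw [hsum, real_inner_comm]
    exact hy (z + μ) (mem_translate_add' μ E z hz)
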